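/- If T and S are trees that are minors of each other and both have only finitely many vertices of degree greater than 2, then |F(T)| = |F(S)|, where F(G) is the set of vertices of G of degree greater than 2. -/

import Mathlib

open SimpleGraph

/-- A ray in a graph: a one-way infinite path. -/
def IsRay {V : Type*} (G : SimpleGraph V) (f : ℕ → V) : Prop :=
  Function.Injective f ∧ ∀ n, G.Adj (f n) (f (n + 1))

/-- The degree of a vertex, as an extended natural number. -/
noncomputable def eDeg {V : Type*} (G : SimpleGraph V) (v : V) : ℕ∞ :=
  (G.neighborSet v).encard

/-- A ray is eventually bare if from some index on all its vertices have degree 2. -/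
def EventuallyBare {V : Type*} (G : SimpleGraph V) (f : ℕ → V) : Prop :=
  ∃ M : ℕ, ∀ n ≥ M, eDeg G (f n) = 2

/-- A tree is small if every ray in it is eventually bare. -/
def IsSmall {V : Type*} (G : SimpleGraph V) : Prop :=
  ∀ f : ℕ → V, IsRay G f → EventuallyBare G f

/-- A minor model of `T` in `S`: pairwise disjoint nonempty connected branch sets,
every edge of `T` witnessed by an edge of `S` between the corresponding branch sets. -/
structure IsModel {V W : Type*} (T : SimpleGraph V) (S : SimpleGraph W)
    (μ : V → Set W) : Prop where
  nonempty : ∀ v, (μ v).Nonempty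
  connected : ∀ v, (S.induce (μ v)).Connected
  disjoint : ∀ v w, v ≠ w → Disjoint (μ v) (μ w)
  edge : ∀ v w, T.Adj v w → ∃ a ∈ μ v, ∃ b ∈ μ w, S.Adj a b

/-- `T` is a minor of `S`. -/
def IsMinorOf {V W : Type*} (T : SimpleGraph V) (S : SimpleGraph W) : Prop :=
  ∃ μ : V → Set W, IsModel T S μ

/-- Tree order relative to a root: `v` lies on the (unique) path from `r` to `w`. -/
def treeLE {V : Type*} (G : SimpleGraph V) (r v w : V) : Prop :=
  v = w ∨ ∃ p : G.Walk r w, p.IsPath ∧ v ∈ p.support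

/-- Closure of a vertex set: the set together with all vertices on paths joining its members. -/
def treeClosure {V : Type*} (G : SimpleGraph V) (A : Set V) : Set V :=
  A ∪ {x | ∃ a ∈ A, ∃ b ∈ A, ∃ p : G.Walk a b, p.IsPath ∧ x ∈ p.support}


private lemma two_lt_encard' {α : Type*} {s : Set α} (h : 2 < s.encard) :
    ∃ a b c, a ∈ s ∧ b ∈ s ∧ c ∈ s ∧ a ≠ b ∧ a ≠ c ∧ b ≠ c := by
  obtain ⟨a, b, ha, hb, hab⟩ := Set.one_lt_encard_iff.1 (lt_trans (by norm_num) h)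
  by_contra hcon
  push_neg at hcon
  have hsub : s ⊆ {a, b} := by
    intro c hc
    by_contra hc2
    simp only [Set.mem_insert_iff, Set.mem_singleton_iff] at hc2
    push_neg at hc2
    exact hc2.2 (hcon a b c ha hb hc hab hc2.1.symm).symm
  exact absurd (le_trans (Set.encard_mono hsub) (Set.encard_pair hab).le) (not_le.2 h)

private lemma two_lt_eDeg_of' {W : Type*} {S : SimpleGraph W} {x z1 z2 z3 : W}
    (h12 : z1 ≠ z2) (h13 : z1 ≠ z3) (h23 : z2 ≠ z3)
    (a1 : S.Adj x z1) (a2 : S.Adj x z2) (a3 : S.Adj x z3) : 2 < eDeg S x := by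
  have hsub : ({z1, z2, z3} : Set W) ⊆ S.neighborSet x := by
    intro z hz
    rcases hz with rfl | rfl | rfl <;> assumption
  have h3 : ({z1, z2, z3} : Set W).encard = 3 := by
    rw [Set.encard_insert_of_notMem (by simp [h12, h13]), Set.encard_pair h23]; rfl
  have : (3 : ℕ∞) ≤ eDeg S x := h3 ▸ Set.encard_mono hsub
  exact lt_of_lt_of_le (by norm_num) this

section WalkLemmas
variable {W : Type*} {S : SimpleGraph W}

private lemma exists_adj_head' {u v : W} (p : S.Walk u v) (huv : u ≠ v) :
    ∃ s, s ∈ p.support ∧ S.Adj u s := by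
  cases p with
  | nil => exact absurd rfl huv
  | cons h q => exact ⟨_, by simp [Walk.support_cons, q.start_mem_support], h⟩

private lemma exists_adj_tail' {u v : W} (p : S.Walk u v) (huv : u ≠ v) :
    ∃ s, s ∈ p.support ∧ S.Adj v s := by
  obtain ⟨s, hs, hadj⟩ := exists_adj_head' p.reverse huv.symm
  exact ⟨s, by simpa [Walk.support_reverse] using hs, hadj⟩

private lemma interior_two_adj' : ∀ {u v x : W} (p : S.Walk u v), p.IsPath →
    x ∈ p.support → x ≠ u → x ≠ v →
    ∃ z1 z2, z1 ≠ z2 ∧ z1 ∈ p.support ∧ z2 ∈ p.support ∧ S.Adj x z1 ∧ S.Adj x z2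
  | u, _, x, Walk.nil, hp, hx, hxu, hxv => by
    simp only [Walk.support_nil, List.mem_singleton] at hx
    exact absurd hx hxu
  | u, v, x, @Walk.cons _ _ _ w _ h q, hp, hx, hxu, hxv => by
    have hxq : x ∈ q.support := by
      simp only [Walk.support_cons, List.mem_cons] at hx
      exact hx.resolve_left hxu
    by_cases hxw : x = w
    · subst hxw
      obtain ⟨s, hs, hadj⟩ := exists_adj_head' q hxv
      have hu : u ∉ q.support := ((Walk.cons_isPath_iff h q).1 hp).2
      refine ⟨u, s, fun hus => hu (hus ▸ hs), by simp [Walk.support_cons],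
        by simp [Walk.support_cons, hs], h.symm, hadj⟩
    · obtain ⟨z1, z2, hne, hz1, hz2, ha1, ha2⟩ :=
        interior_two_adj' q hp.of_cons hxq hxw hxv
      exact ⟨z1, z2, hne, by simp [Walk.support_cons, hz1],
        by simp [Walk.support_cons, hz2], ha1, ha2⟩

private lemma first_hit' {P : Set W} : ∀ {c d : W} (q : S.Walk c d), c ∉ P → d ∈ P →
    ∃ x y, x ∈ P ∧ y ∈ q.support ∧ y ∉ P ∧ S.Adj y x
  | c, _, Walk.nil, hc, hd => absurd hd hc
  | c, d, @Walk.cons _ _ _ e _ h q, hc, hd => by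
    by_cases he : e ∈ P
    · exact ⟨e, c, he, by simp [Walk.support_cons], hc, h⟩
    · obtain ⟨x, y, hx, hy, hyP, hyx⟩ := first_hit' q he hd
      exact ⟨x, y, hx, by simp [Walk.support_cons, hy], hyP, hyx⟩

end WalkLemmas

section Key
variable {W : Type*} {S : SimpleGraph W}

private lemma get_walk' {C : Set W} (hconn : (S.induce C).Connected)
    {x y : W} (hx : x ∈ C) (hy : y ∈ C) :
    ∃ p : S.Walk x y, p.IsPath ∧ ∀ z ∈ p.support, z ∈ C := by
  classical
  obtain ⟨q⟩ := hconn ⟨x, hx⟩ ⟨y, hy⟩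
  let q' := q.toPath
  refine ⟨(q'.val.map (Embedding.induce (G := S) C).toHom), Walk.map_isPath_of_injective
    (Embedding.induce (G := S) C).injective q'.2, ?_⟩
  intro z hz
  change z ∈ (Walk.map (Embedding.induce (G := S) C).toHom q'.val).support at hz
  rw [Walk.support_map, List.mem_map] at hz
  obtain ⟨z', _, rfl⟩ := hz
  exact z'.2

private lemma key' {C : Set W} (hconn : (S.induce C).Connected)
    {b1 b2 b3 a1 a2 a3 : W} (hb1 : b1 ∈ C) (hb2 : b2 ∈ C) (hb3 : b3 ∈ C)
    (ha1 : a1 ∉ C) (ha2 : a2 ∉ C) (ha3 : a3 ∉ C)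
    (h12 : a1 ≠ a2) (h13 : a1 ≠ a3) (h23 : a2 ≠ a3)
    (hA1 : S.Adj b1 a1) (hA2 : S.Adj b2 a2) (hA3 : S.Adj b3 a3) :
    ∃ w ∈ C, 2 < eDeg S w := by
  obtain ⟨p, hp, hpC⟩ := get_walk' hconn hb1 hb2
  have pfull : ∀ x ∈ p.support, ∃ z1 z2, z1 ≠ z2 ∧ S.Adj x z1 ∧ S.Adj x z2 ∧
      (z1 ∈ p.support ∨ z1 = a1 ∨ z1 = a2) ∧ (z2 ∈ p.support ∨ z2 = a1 ∨ z2 = a2) := by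
    intro x hx
    by_cases hxu : x = b1
    · subst hxu
      by_cases heq : x = b2
      · exact ⟨a1, a2, h12, hA1, heq ▸ hA2, Or.inr (Or.inl rfl), Or.inr (Or.inr rfl)⟩
      · obtain ⟨s, hs, hadj⟩ := exists_adj_head' p heq
        exact ⟨a1, s, fun h => ha1 (h ▸ hpC s hs), hA1, hadj,
          Or.inr (Or.inl rfl), Or.inl hs⟩
    · by_cases hxv : x = b2
      · subst hxv
        obtain ⟨s, hs, hadj⟩ := exists_adj_tail' p (fun h => hxu h.symm)
        exact ⟨a2, s, fun h => ha2 (h ▸ hpC s hs), hA2, hadj,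
          Or.inr (Or.inr rfl), Or.inl hs⟩
      · obtain ⟨z1, z2, hne, hz1, hz2, ha1', ha2'⟩ := interior_two_adj' p hp hx hxu hxv
        exact ⟨z1, z2, hne, ha1', ha2', Or.inl hz1, Or.inl hz2⟩
  have nota3 : ∀ z, (z ∈ p.support ∨ z = a1 ∨ z = a2) → z ≠ a3 := by
    rintro z (hz | rfl | rfl)
    · exact fun h => ha3 (h ▸ hpC z hz)
    · exact h13
    · exact h23
  by_cases hb3p : b3 ∈ p.support
  · obtain ⟨z1, z2, hne, hz1, hz2, hm1, hm2⟩ := pfull b3 hb3p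
    exact ⟨b3, hb3, two_lt_eDeg_of' hne (nota3 z1 hm1) (nota3 z2 hm2) hz1 hz2 hA3⟩
  · obtain ⟨q, _, hqC⟩ := get_walk' hconn hb3 hb1
    obtain ⟨x, y, hxP, hyq, hyP, hyx⟩ :=
      first_hit' (P := {z | z ∈ p.support}) q hb3p p.start_mem_support
    obtain ⟨z1, z2, hne, hz1, hz2, hm1, hm2⟩ := pfull x hxP
    have hyC : y ∈ C := hqC y hyq
    have noty : ∀ z, (z ∈ p.support ∨ z = a1 ∨ z = a2) → z ≠ y := by
      rintro z (hz | rfl | rfl)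
      · exact fun h => hyP (h ▸ hz)
      · exact fun h => ha1 (h ▸ hyC)
      · exact fun h => ha2 (h ▸ hyC)
    exact ⟨x, hpC x hxP, two_lt_eDeg_of' hne (noty z1 hm1) (noty z2 hm2) hz1 hz2 hyx.symm⟩

end Key

private lemma model_pushes' {V W : Type*} {T : SimpleGraph V} {S : SimpleGraph W}
    {μ : V → Set W} (hM : IsModel T S μ) {v : V} (hv : 2 < eDeg T v) :
    ∃ w ∈ μ v, 2 < eDeg S w := by
  obtain ⟨v1, v2, v3, hm1, hm2, hm3, h12, h13, h23⟩ := two_lt_encard' hv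
  rw [mem_neighborSet] at hm1 hm2 hm3
  obtain ⟨b1, hb1, a1, ha1, hA1⟩ := hM.edge v v1 hm1
  obtain ⟨b2, hb2, a2, ha2, hA2⟩ := hM.edge v v2 hm2
  obtain ⟨b3, hb3, a3, ha3, hA3⟩ := hM.edge v v3 hm3
  have notin : ∀ {vi : V} {ai : W}, T.Adj v vi → ai ∈ μ vi → ai ∉ μ v := by
    intro vi ai hadj hai
    exact fun h => Set.disjoint_left.1 (hM.disjoint v vi hadj.ne) h hai
  have dis : ∀ {vi vj : V} {ai aj : W}, vi ≠ vj → ai ∈ μ vi → aj ∈ μ vj → ai ≠ aj := by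
    intro vi vj ai aj hne hai haj h
    exact Set.disjoint_left.1 (hM.disjoint vi vj hne) hai (h ▸ haj)
  exact key' (hM.connected v) hb1 hb2 hb3 (notin hm1 ha1) (notin hm2 ha2) (notin hm3 ha3)
    (dis h12 ha1 ha2) (dis h13 ha1 ha3) (dis h23 ha2 ha3) hA1 hA2 hA3

private lemma card_le' {V W : Type*} {T : SimpleGraph V} {S : SimpleGraph W}
    {μ : V → Set W} (hM : IsModel T S μ)
    (hfS : {w : W | 2 < eDeg S w}.Finite) :
    {v : V | 2 < eDeg T v}.ncard ≤ {w : W | 2 < eDeg S w}.ncard := by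
  classical
  rcases Set.eq_empty_or_nonempty {v : V | 2 < eDeg T v} with he | ⟨v0, hv0⟩
  · simp [he]
  have hchoice : ∀ v : V, ∃ w : W, 2 < eDeg T v → w ∈ μ v ∧ 2 < eDeg S w := by
    intro v
    by_cases hv : 2 < eDeg T v
    · obtain ⟨w, hw1, hw2⟩ := model_pushes' hM hv
      exact ⟨w, fun _ => ⟨hw1, hw2⟩⟩
    · exact ⟨(model_pushes' hM hv0).choose, fun h => absurd h hv⟩
  choose f hf using hchoice
  refine Set.ncard_le_ncard_of_injOn f (fun v hv => (hf v hv).2) ?_ hfS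
  intro v hv v' hv' hff
  by_contra hne
  exact Set.disjoint_left.1 (hM.disjoint v v' hne) (hf v hv).1 (hff ▸ (hf v' hv').1)


/-- Trees that are minors of each other and have finitely many vertices of
degree `> 2` have equally many such vertices. -/
theorem stmt3 {V W : Type*} (T : SimpleGraph V) (S : SimpleGraph W)
    (hT : T.IsTree) (hS : S.IsTree) (h1 : IsMinorOf T S) (h2 : IsMinorOf S T)
    (hfT : {v : V | 2 < eDeg T v}.Finite) (hfS : {w : W | 2 < eDeg S w}.Finite) :
    {v : V | 2 < eDeg T v}.ncard = {w : W | 2 < eDeg S w}.ncard := by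
  obtain ⟨μ1, hM1⟩ := h1
  obtain ⟨μ2, hM2⟩ := h2
  exact le_antisymm (card_le' hM1 hfS) (card_le' hM2 hfT)
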